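/- For all x in (-1,1), arcsin(x) = ∑_{n=0}^∞ (2^{-2n}/(2n+1)) · C(2n,n) · x^{2n+1}. -/

import Mathlib

open Real Set


noncomputable def aa (n : ℕ) : ℝ := (Nat.centralBinom n : ℝ) / 4 ^ n

lemma aa_pos (n : ℕ) : 0 < aa n := by
  unfold aa
  have := n.centralBinom_pos
  positivity

lemma aa_succ (n : ℕ) : 2 * (n + 1) * aa (n + 1) = (2 * n + 1) * aa n := by
  unfold aa
  have h' : ((n : ℝ) + 1) * (Nat.centralBinom (n + 1) : ℝ)
      = 2 * (2 * n + 1) * (Nat.centralBinom n : ℝ) := by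
    exact_mod_cast congrArg Nat.cast (Nat.succ_mul_centralBinom_succ n)
  have h4 : (4 : ℝ) ^ (n + 1) = 4 * 4 ^ n := by ring
  field_simp
  rw [h4]
  linear_combination (2 * (4:ℝ) ^ n) * h'

lemma aa_le_one (n : ℕ) : aa n ≤ 1 := by
  induction n with
  | zero => simp [aa, Nat.centralBinom]
  | succ n ih =>
    have h := aa_succ n
    have h2 : (0:ℝ) < 2 * (n + 1) := by positivity
    have heq : aa (n+1) = (2*n+1)/(2*(n+1)) * aa n := by
      field_simp; linarith
    rw [heq]
    have hle : (2*(n:ℝ)+1)/(2*(n+1)) ≤ 1 := by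
      rw [div_le_one h2]; linarith
    calc (2*(n:ℝ)+1)/(2*(n+1)) * aa n ≤ 1 * aa n :=
          mul_le_mul_of_nonneg_right hle (aa_pos n).le
      _ ≤ 1 := by simpa using ih

noncomputable def GG (t : ℝ) : ℝ := ∑' n, aa n * t ^ n

noncomputable def DD (t : ℝ) : ℝ := ∑' n : ℕ, (n : ℝ) * aa n * t ^ (n - 1)

lemma summable_GG {t : ℝ} (ht : |t| < 1) : Summable (fun n => aa n * t ^ n) := by
  apply Summable.of_norm_bounded (summable_geometric_of_lt_one (abs_nonneg t) ht)
  intro n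
  rw [norm_mul, norm_pow, Real.norm_eq_abs, Real.norm_eq_abs, abs_of_pos (aa_pos n)]
  calc aa n * |t| ^ n ≤ 1 * |t| ^ n :=
        mul_le_mul_of_nonneg_right (aa_le_one n) (by positivity)
    _ = |t| ^ n := one_mul _

lemma summable_u {r : ℝ} (hr0 : 0 ≤ r) (hr : r < 1) :
    Summable (fun n : ℕ => (n : ℝ) * r ^ (n - 1)) := by
  rw [← summable_nat_add_iff 1]
  have h1 : Summable (fun n : ℕ => (n : ℝ) ^ 1 * r ^ n) :=
    summable_pow_mul_geometric_of_norm_lt_one 1 (by rwa [Real.norm_eq_abs, abs_of_nonneg hr0])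
  have h2 : Summable (fun n : ℕ => r ^ n) := summable_geometric_of_lt_one hr0 hr
  apply ((h1.add h2).congr)
  intro n
  simp only [pow_one, Nat.add_sub_cancel, Nat.cast_add, Nat.cast_one]
  ring

lemma GG_hasDerivAt {t : ℝ} (ht : t ∈ Ioo (-1 : ℝ) 1) : HasDerivAt GG (DD t) t := by
  obtain ⟨h1, h2⟩ := ht
  set r : ℝ := (|t| + 1) / 2 with hr
  have habs : |t| < 1 := abs_lt.2 ⟨h1, h2⟩
  have htr : |t| < r := by rw [hr]; linarith
  have hr1 : r < 1 := by rw [hr]; linarith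
  have hr0 : 0 ≤ r := by rw [hr]; positivity
  have h0r : 0 < r := by rw [hr]; positivity
  have hgd : ∀ (n : ℕ) (y : ℝ), y ∈ Ioo (-r) r →
      HasDerivAt (fun z => aa n * z ^ n) ((n : ℝ) * aa n * y ^ (n - 1)) y := by
    intro n y _
    have := (hasDerivAt_pow n y).const_mul (aa n)
    exact this.congr_deriv (by ring)
  have hbd : ∀ (n : ℕ) (y : ℝ), y ∈ Ioo (-r) r →
      ‖(n : ℝ) * aa n * y ^ (n - 1)‖ ≤ (n : ℝ) * r ^ (n - 1) := by
    intro n y hy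
    have hy' : |y| ≤ r := le_of_lt (abs_lt.2 ⟨hy.1, hy.2⟩)
    rw [norm_mul, norm_mul, Real.norm_eq_abs, Real.norm_eq_abs, Real.norm_eq_abs,
      abs_of_pos (aa_pos n), abs_pow, Nat.abs_cast]
    calc (n:ℝ) * aa n * |y| ^ (n-1) ≤ (n:ℝ) * 1 * r ^ (n-1) := by
          apply mul_le_mul (mul_le_mul_of_nonneg_left (aa_le_one n) (Nat.cast_nonneg n))
            (pow_le_pow_left₀ (abs_nonneg y) hy' _) (by positivity) (by positivity)
      _ = (n:ℝ) * r ^ (n-1) := by ring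
  have h0mem : (0:ℝ) ∈ Ioo (-r) r := ⟨by linarith, h0r⟩
  have hsum0 : Summable (fun n => aa n * (0:ℝ) ^ n) := summable_GG (by simpa using one_pos)
  exact hasDerivAt_tsum_of_isPreconnected (summable_u hr0 hr1) isOpen_Ioo
    (convex_Ioo _ _).isPreconnected hgd hbd h0mem hsum0 (abs_lt.1 htr)

lemma summable_DD {t : ℝ} (ht : |t| < 1) :
    Summable (fun n : ℕ => (n : ℝ) * aa n * t ^ (n - 1)) := by
  apply Summable.of_norm_bounded (summable_u (abs_nonneg t) ht)
  intro n
  rw [norm_mul, norm_mul, Real.norm_eq_abs, Real.norm_eq_abs, Real.norm_eq_abs,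
    abs_of_pos (aa_pos n), abs_pow, Nat.abs_cast]
  calc (n:ℝ) * aa n * |t| ^ (n-1) ≤ (n:ℝ) * 1 * |t| ^ (n-1) :=
        mul_le_mul_of_nonneg_right (mul_le_mul_of_nonneg_left (aa_le_one n) (Nat.cast_nonneg n))
          (by positivity)
    _ = (n:ℝ) * |t| ^ (n-1) := by ring

lemma GG_ode {t : ℝ} (ht : t ∈ Ioo (-1 : ℝ) 1) : 2 * (1 - t) * DD t = GG t := by
  have habs : |t| < 1 := abs_lt.2 ⟨ht.1, ht.2⟩
  have hD : HasSum (fun n : ℕ => (n : ℝ) * aa n * t ^ (n - 1)) (DD t) :=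
    (summable_DD habs).hasSum
  have hG : HasSum (fun n : ℕ => aa n * t ^ n) (GG t) := (summable_GG habs).hasSum
  -- shifted sum
  have h2D : HasSum (fun n : ℕ => 2 * ((n : ℝ) * aa n * t ^ (n - 1))) (2 * DD t) :=
    hD.mul_left 2
  have hshift0 := (hasSum_nat_add_iff' (f := fun n : ℕ => 2 * ((n : ℝ) * aa n * t ^ (n - 1))) 1).2 h2D
  simp only [Finset.range_one, Finset.sum_singleton, Nat.cast_zero, zero_mul, mul_zero, sub_zero] at hshift0
  -- hshift0 : HasSum (fun n => 2 * ((n+1) * aa (n+1) * t ^ n)) (2 * DD t)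
  have hkey : ∀ n : ℕ, 2 * (((n:ℕ)+1 : ℝ) * aa (n+1) * t ^ (n + 1 - 1))
      = 2 * t * ((n : ℝ) * aa n * t ^ (n - 1)) + aa n * t ^ n := by
    intro n
    have h := aa_succ n
    have : 2 * (((n:ℕ)+1 : ℝ) * aa (n+1)) = (2 * n + 1) * aa n := by
      push_cast
      linarith [h]
    cases n with
    | zero => simpa using this
    | succ m =>
      have hpow : t ^ (m + 1 - 1) * t = t ^ (m + 1) := by
        rw [Nat.add_sub_cancel, ← pow_succ]
      calc 2 * (((m+1:ℕ)+1 : ℝ) * aa (m+1+1) * t ^ (m + 1 + 1 - 1))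
          = (2 * (((m+1:ℕ)+1 : ℝ) * aa (m+1+1))) * t ^ (m+1) := by
            rw [Nat.add_sub_cancel]; ring
        _ = ((2 * (m+1:ℕ) + 1 : ℝ) * aa (m+1)) * t ^ (m+1) := by rw [this]
        _ = 2 * t * (((m+1:ℕ) : ℝ) * aa (m+1) * t ^ (m + 1 - 1)) + aa (m+1) * t ^ (m+1) := by
            rw [mul_comm (2*t)]
            rw [show ((m+1:ℕ):ℝ) * aa (m+1) * t ^ (m+1-1) * (2*t)
              = 2 * (((m+1:ℕ):ℝ) * aa (m+1)) * (t ^ (m+1-1) * t) by ring, hpow]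
            push_cast
            ring
  have hRHS : HasSum (fun n : ℕ => 2 * t * ((n : ℝ) * aa n * t ^ (n - 1)) + aa n * t ^ n)
      (2 * t * DD t + GG t) := (hD.mul_left (2*t)).add hG
  have hfun : (fun n : ℕ => 2 * (((n:ℕ)+1 : ℝ) * aa (n+1) * t ^ (n + 1 - 1)))
      = fun n : ℕ => 2 * t * ((n : ℝ) * aa n * t ^ (n - 1)) + aa n * t ^ n := funext hkey
  have hshift1 : HasSum (fun n : ℕ => 2 * t * ((n : ℝ) * aa n * t ^ (n - 1)) + aa n * t ^ n)
      (2 * DD t) := by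
    rw [← hfun]
    simpa using hshift0
  have heq : 2 * DD t = 2 * t * DD t + GG t := hshift1.unique hRHS
  linarith [heq]

lemma GG_zero : GG 0 = 1 := by
  unfold GG
  rw [tsum_eq_single 0 (by intro n hn; simp [zero_pow hn])]
  simp [aa, Nat.centralBinom]

lemma GG_sq {t : ℝ} (ht : t ∈ Ioo (-1 : ℝ) 1) : (1 - t) * GG t ^ 2 = 1 := by
  set H : ℝ → ℝ := fun s => (1 - s) * GG s ^ 2 with hH
  have hderiv : ∀ s ∈ Ioo (-1 : ℝ) 1, HasDerivAt H 0 s := by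
    intro s hs
    have hG := GG_hasDerivAt hs
    have h1 : HasDerivAt (fun u : ℝ => 1 - u) (-1) s := by
      simpa using (hasDerivAt_id s).const_sub 1
    have h2 : HasDerivAt (fun u => GG u ^ 2) (2 * GG s * DD s) s := by
      exact (hG.pow 2).congr_deriv (by norm_num)
    have := h1.mul h2
    have hode := GG_ode hs
    exact this.congr_deriv (by linear_combination (GG s) * hode)
  have hconst : H t = H 0 := by
    have hopen : IsOpen (Ioo (-1:ℝ) 1) := isOpen_Ioo
    refine Convex.is_const_of_fderivWithin_eq_zero (convex_Ioo (-1:ℝ) 1)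
      (fun s hs => ((hderiv s hs).differentiableAt).differentiableWithinAt)
      (fun s hs => ?_) ht ⟨by norm_num, by norm_num⟩
    rw [fderivWithin_of_isOpen hopen hs, (hderiv s hs).hasFDerivAt.fderiv]
    ext u
    simp
  have h0 : H 0 = 1 := by simp [hH, GG_zero]
  rw [h0] at hconst
  exact hconst

lemma GG_ne_zero {t : ℝ} (ht : t ∈ Ioo (-1 : ℝ) 1) : GG t ≠ 0 := by
  intro h
  have := GG_sq ht
  rw [h] at this
  simp at this

lemma GG_pos {t : ℝ} (ht : t ∈ Ioo (-1 : ℝ) 1) : 0 < GG t := by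
  rcases lt_or_ge 0 (GG t) with h | h
  · exact h
  exfalso
  have hne := GG_ne_zero ht
  have hlt : GG t < 0 := h.lt_of_ne hne
  rcases le_total t 0 with h0 | h0
  · have hsub : Icc t 0 ⊆ Ioo (-1:ℝ) 1 := fun s hs => ⟨lt_of_lt_of_le ht.1 hs.1, lt_of_le_of_lt hs.2 one_pos⟩
    have hcont : ContinuousOn GG (Icc t 0) := fun s hs =>
      (GG_hasDerivAt (hsub hs)).continuousAt.continuousWithinAt
    have := intermediate_value_Icc h0 hcont
    have h0mem : (0:ℝ) ∈ Icc (GG t) (GG 0) := by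
      rw [GG_zero]; exact ⟨hlt.le, one_pos.le⟩
    obtain ⟨c, hc, hc0⟩ := this h0mem
    exact GG_ne_zero (hsub hc) hc0
  · have hsub : Icc 0 t ⊆ Ioo (-1:ℝ) 1 := fun s hs => ⟨lt_of_lt_of_le (by linarith : (-1:ℝ) < 0) hs.1, lt_of_le_of_lt hs.2 ht.2⟩
    have hcont : ContinuousOn GG (Icc 0 t) := fun s hs =>
      (GG_hasDerivAt (hsub hs)).continuousAt.continuousWithinAt
    have := intermediate_value_Icc' h0 hcont
    have h0mem : (0:ℝ) ∈ Icc (GG t) (GG 0) := by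
      rw [GG_zero]; exact ⟨hlt.le, one_pos.le⟩
    obtain ⟨c, hc, hc0⟩ := this h0mem
    exact GG_ne_zero (hsub hc) hc0

lemma GG_eq {t : ℝ} (ht : t ∈ Ioo (-1 : ℝ) 1) : GG t = 1 / Real.sqrt (1 - t) := by
  have h1t : (0:ℝ) < 1 - t := by linarith [ht.2]
  have hsq := GG_sq ht
  have hpos := GG_pos ht
  have hs : Real.sqrt (1 - t) * GG t = 1 := by
    have h2 : (Real.sqrt (1 - t) * GG t) ^ 2 = 1 := by
      rw [mul_pow, Real.sq_sqrt h1t.le]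
      exact hsq
    have hp : 0 < Real.sqrt (1 - t) * GG t := by positivity
    nlinarith [h2, hp]
  field_simp
  linarith [hs]

noncomputable def FF (x : ℝ) : ℝ := ∑' n : ℕ, aa n / (2 * n + 1) * x ^ (2 * n + 1)

lemma term_bound (n : ℕ) {x r : ℝ} (hx : |x| ≤ r) :
    ‖aa n / (2 * n + 1) * x ^ (2 * n + 1)‖ ≤ r * (r ^ 2) ^ n := by
  have hr0 : 0 ≤ r := le_trans (abs_nonneg x) hx
  have h1 : (0:ℝ) < 2 * n + 1 := by positivity
  rw [norm_mul, norm_div, norm_pow, Real.norm_eq_abs, Real.norm_eq_abs, Real.norm_eq_abs,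
    abs_of_pos (aa_pos n), abs_of_pos h1]
  have hd : aa n / (2 * (n:ℝ) + 1) ≤ 1 :=
    div_le_one_of_le₀ (le_trans (aa_le_one n) (by linarith)) h1.le
  calc aa n / (2*(n:ℝ)+1) * |x| ^ (2*n+1) ≤ 1 * r ^ (2*n+1) := by
        apply mul_le_mul hd (pow_le_pow_left₀ (abs_nonneg x) hx _) (by positivity) one_pos.le
    _ = r * (r^2)^n := by rw [one_mul, pow_succ, pow_mul]; ring

lemma summable_FF {x : ℝ} (hx : |x| < 1) :
    Summable (fun n : ℕ => aa n / (2 * n + 1) * x ^ (2 * n + 1)) := by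
  have hx2 : x ^ 2 < 1 := by nlinarith [abs_nonneg x, sq_abs x, le_abs_self x, neg_abs_le x]
  have : Summable (fun n : ℕ => |x| * (x ^ 2) ^ n) :=
    (summable_geometric_of_lt_one (by positivity) hx2).mul_left _
  apply Summable.of_norm_bounded this
  intro n
  have := term_bound n (le_refl |x|)
  calc ‖aa n / (2 * n + 1) * x ^ (2 * n + 1)‖ ≤ |x| * (|x| ^ 2) ^ n := this
    _ = |x| * (x ^ 2) ^ n := by rw [sq_abs]

lemma FF_hasDerivAt {x : ℝ} (hx : x ∈ Ioo (-1 : ℝ) 1) :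
    HasDerivAt FF (∑' n : ℕ, aa n * x ^ (2 * n)) x := by
  obtain ⟨h1, h2⟩ := hx
  set r : ℝ := (|x| + 1) / 2 with hr
  have habs : |x| < 1 := abs_lt.2 ⟨h1, h2⟩
  have htr : |x| < r := by rw [hr]; linarith
  have hr1 : r < 1 := by rw [hr]; linarith
  have h0r : 0 < r := by rw [hr]; positivity
  have hu : Summable (fun n : ℕ => (r ^ 2) ^ n) :=
    summable_geometric_of_lt_one (by positivity) (by nlinarith)
  have hgd : ∀ (n : ℕ) (y : ℝ), y ∈ Ioo (-r) r →
      HasDerivAt (fun z => aa n / (2 * n + 1) * z ^ (2 * n + 1)) (aa n * y ^ (2 * n)) y := by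
    intro n y _
    have h21 : ((2 * n + 1 : ℕ) : ℝ) ≠ 0 := by positivity
    have := (hasDerivAt_pow (2 * n + 1) y).const_mul (aa n / (2 * n + 1))
    exact this.congr_deriv (by rw [Nat.add_sub_cancel]; push_cast; field_simp)
  have hbd : ∀ (n : ℕ) (y : ℝ), y ∈ Ioo (-r) r →
      ‖aa n * y ^ (2 * n)‖ ≤ (r ^ 2) ^ n := by
    intro n y hy
    have hy' : |y| ≤ r := le_of_lt (abs_lt.2 ⟨hy.1, hy.2⟩)
    rw [norm_mul, norm_pow, Real.norm_eq_abs, Real.norm_eq_abs, abs_of_pos (aa_pos n), ← pow_mul]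
    calc aa n * |y| ^ (2 * n) ≤ 1 * r ^ (2 * n) := by
          apply mul_le_mul (aa_le_one n) (pow_le_pow_left₀ (abs_nonneg y) hy' _)
            (by positivity) one_pos.le
      _ = r ^ (2 * n) := one_mul _
  have h0mem : (0:ℝ) ∈ Ioo (-r) r := ⟨by linarith, h0r⟩
  have hsum0 : Summable (fun n : ℕ => aa n / (2 * n + 1) * (0:ℝ) ^ (2 * n + 1)) :=
    summable_FF (by simp)
  exact hasDerivAt_tsum_of_isPreconnected hu isOpen_Ioo (convex_Ioo _ _).isPreconnected
    hgd hbd h0mem hsum0 (abs_lt.1 htr)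

lemma FF_deriv_eq {x : ℝ} (hx : x ∈ Ioo (-1 : ℝ) 1) :
    HasDerivAt FF (1 / Real.sqrt (1 - x ^ 2)) x := by
  have h := FF_hasDerivAt hx
  have hx2 : x ^ 2 ∈ Ioo (-1:ℝ) 1 := by
    constructor
    · nlinarith [sq_nonneg x]
    · nlinarith [hx.1, hx.2]
  have : (∑' n : ℕ, aa n * x ^ (2 * n)) = GG (x ^ 2) := by
    unfold GG
    congr 1
    funext n
    rw [pow_mul]
  rwa [this, GG_eq hx2] at h

lemma FF_zero : FF 0 = 0 := by
  unfold FF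
  rw [tsum_eq_single 0 (by intro n hn; simp)]
  simp

lemma FF_eq_arcsin {x : ℝ} (hx : x ∈ Ioo (-1 : ℝ) 1) : FF x = arcsin x := by
  set φ : ℝ → ℝ := fun y => FF y - arcsin y with hφ
  have hderiv : ∀ s ∈ Ioo (-1 : ℝ) 1, HasDerivAt φ 0 s := by
    intro s hs
    have h1 := FF_deriv_eq hs
    have h2 := Real.hasDerivAt_arcsin (ne_of_gt hs.1) (ne_of_lt hs.2)
    exact (h1.sub h2).congr_deriv (by simp)
  have hconst : φ x = φ 0 := by
    have hopen : IsOpen (Ioo (-1:ℝ) 1) := isOpen_Ioo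
    refine Convex.is_const_of_fderivWithin_eq_zero (convex_Ioo (-1:ℝ) 1)
      (fun s hs => ((hderiv s hs).differentiableAt).differentiableWithinAt)
      (fun s hs => ?_) hx ⟨by norm_num, by norm_num⟩
    rw [fderivWithin_of_isOpen hopen hs, (hderiv s hs).hasFDerivAt.fderiv]
    ext
    simp
  have h0 : φ 0 = 0 := by simp [hφ, FF_zero]
  rw [h0, hφ] at hconst
  simpa [sub_eq_zero] using hconst

theorem stmt2 (x : ℝ) (hx : x ∈ Set.Ioo (-1 : ℝ) 1) :
    HasSum (fun n : ℕ => (2 : ℝ) ^ (-(2 * n : ℤ)) / (2 * n + 1) *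
      Nat.choose (2 * n) n * x ^ (2 * n + 1)) (Real.arcsin x) := by
  have habs : |x| < 1 := abs_lt.2 ⟨hx.1, hx.2⟩
  have hs : HasSum (fun n : ℕ => aa n / (2 * n + 1) * x ^ (2 * n + 1)) (FF x) :=
    (summable_FF habs).hasSum
  rw [FF_eq_arcsin hx] at hs
  have hfun : (fun n : ℕ => (2 : ℝ) ^ (-(2 * n : ℤ)) / (2 * n + 1) *
      Nat.choose (2 * n) n * x ^ (2 * n + 1))
      = fun n : ℕ => aa n / (2 * n + 1) * x ^ (2 * n + 1) := by
    funext n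
    have h2 : (2:ℝ) ^ (-(2 * n : ℤ)) = ((4:ℝ) ^ n)⁻¹ := by
      rw [zpow_neg]
      congr 1
      rw [show ((2 * n : ℤ)) = ((2 * n : ℕ) : ℤ) by push_cast; ring, zpow_natCast, pow_mul]
      norm_num
    have hcb : (Nat.centralBinom n : ℝ) = (Nat.choose (2 * n) n : ℝ) := by
      rw [Nat.centralBinom_eq_two_mul_choose]
    rw [h2, aa, hcb]
    have h4 : ((4:ℝ) ^ n) ≠ 0 := by positivity
    have h21 : (2 * (n:ℝ) + 1) ≠ 0 := by positivity
    field_simp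
  rw [hfun]
  exact hs
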